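/- Consider problem (P) under the surrogate assumption, and suppose (P) has an optimal value F*. Let x ∈ 𝒳 be feasible, and suppose there exist U, τ > 0 and a point x̂ ∈ 𝒳 with c̃_i(x̂|x) ≤ −τ for all i and f̃(x̂|x) + r(x̂) + (L/(1+κ))‖x̂ − x‖^{1+κ} ≤ U. Suppose z* ∈ 𝒳, λ ∈ ℝ^m_{≥0} and l ∈ ∂r(z*) satisfy the first-order conditions of the subproblem (P_x): with d = z* − x, ⟨∇f̃(z*|x) + l + L‖d‖^{κ−1}d + Σ_{i=1}^m λ_i∇c̃_i(z*|x), z − z*⟩ ≥ 0 for all z ∈ 𝒳, c̃_i(z*|x) ≤ 0 and λ_i·c̃_i(z*|x) = 0 for all i. Then Σ_{i=1}^m λ_i ≤ (U − F*)/τ; in particular ‖λ‖_∞ ≤ (U − F*)/τ. -/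

import Mathlib

open scoped RealInnerProductSpace
open Real Set

lemma convex_grad_ineq {n : ℕ} {g : EuclideanSpace ℝ (Fin n) → ℝ}
    (hconv : ConvexOn ℝ univ g) {x g' : EuclideanSpace ℝ (Fin n)}
    (hg : HasGradientAt g g' x) (y : EuclideanSpace ℝ (Fin n)) :
    g x + ⟪g', y - x⟫ ≤ g y := by
  set φ : ℝ → ℝ := fun t => g (x + t • (y - x)) with hφdef
  have hline : HasDerivAt (fun t : ℝ => x + t • (y - x)) (y - x) 0 := by
    simpa using ((hasDerivAt_id (0:ℝ)).smul_const (y - x)).const_add x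
  have hφ : HasDerivAt φ ⟪g', y - x⟫ 0 := by
    have h0 : HasFDerivAt g (InnerProductSpace.toDual ℝ _ g') (x + (0:ℝ) • (y - x)) := by
      simpa using hg.hasFDerivAt
    have := h0.comp_hasDerivAt 0 hline
    exact this
  have h1 : Filter.Tendsto (slope φ 0) (nhdsWithin 0 (Ioi (0:ℝ))) (nhds ⟪g', y - x⟫) :=
    (hasDerivAt_iff_tendsto_slope.mp hφ).mono_left
      (nhdsWithin_mono 0 (fun t ht => ne_of_gt ht))
  have h2 : ∀ᶠ t in nhdsWithin 0 (Ioi (0:ℝ)), slope φ 0 t ≤ g y - g x := by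
    filter_upwards [Ioc_mem_nhdsGT_of_mem (left_mem_Ico.mpr one_pos)] with t ht
    have hconvineq : φ t ≤ (1 - t) * g x + t * g y := by
      have hx : x + t • (y - x) = (1 - t) • x + t • y := by
        simp [smul_sub, sub_smul]; abel
      have := hconv.2 (mem_univ x) (mem_univ y) (by linarith [ht.2] : (0:ℝ) ≤ 1 - t)
        (le_of_lt ht.1) (by ring)
      rw [hφdef]; simp only [hx]
      simpa [smul_eq_mul] using this
    have hφ0 : φ 0 = g x := by simp [hφdef]
    rw [slope_def_field]
    have : (φ t - φ 0) / (t - 0) ≤ g y - g x := by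
      rw [sub_zero, div_le_iff₀ ht.1, hφ0]
      nlinarith [ht.1]
    simpa [div_sub_div_same] using this
  have := le_of_tendsto h1 h2
  linarith

lemma rpow_grad_ineq {a b κ : ℝ} (ha : 0 ≤ a) (hb : 0 ≤ b) (hκ0 : 0 < κ) (hκ1 : κ ≤ 1) :
    a ^ κ * (b - a) ≤ (b ^ (1 + κ) - a ^ (1 + κ)) / (1 + κ) := by
  have hp1 : (1:ℝ) < 1 + κ := by linarith
  have hp0 : (0:ℝ) < 1 + κ := by linarith
  rcases ha.eq_or_lt with h | h
  · subst h
    rw [Real.zero_rpow hκ0.ne', Real.zero_rpow hp0.ne']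
    simp only [zero_mul, sub_zero]
    positivity
  · set s : ℝ := (b - a) / a with hs
    have hs1 : -1 ≤ s := by
      have hseq : s = b / a - 1 := by rw [hs, sub_div, div_self h.ne']
      have : 0 ≤ b / a := div_nonneg hb h.le
      linarith
    have hbern := one_add_mul_self_le_rpow_one_add hs1 hp1.le
    have h1s : a * (1 + s) = b := by rw [hs]; field_simp; ring
    have hkey : a ^ (1 + κ) * (1 + (1 + κ) * s) ≤ b ^ (1 + κ) := by
      calc a ^ (1 + κ) * (1 + (1 + κ) * s)
          ≤ a ^ (1 + κ) * (1 + s) ^ (1 + κ) :=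
            mul_le_mul_of_nonneg_left hbern (Real.rpow_nonneg ha _)
        _ = (a * (1 + s)) ^ (1 + κ) := by
            rw [Real.mul_rpow ha (by linarith : (0:ℝ) ≤ 1 + s)]
        _ = b ^ (1 + κ) := by rw [h1s]
    have hsplit : a ^ (1 + κ) * s = a ^ κ * (b - a) := by
      have : a ^ (1 + κ) = a * a ^ κ := by
        rw [Real.rpow_add h, Real.rpow_one]
      rw [this, hs]; field_simp
    have : a ^ (1 + κ) + (1 + κ) * (a ^ κ * (b - a)) ≤ b ^ (1 + κ) := by
      have := hkey
      nlinarith [hsplit]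
    rw [le_div_iff₀ hp0]
    nlinarith


/-- The convex subdifferential of `r` at `u`. -/
def subgrad {n : ℕ} (r : EuclideanSpace ℝ (Fin n) → ℝ)
    (u : EuclideanSpace ℝ (Fin n)) : Set (EuclideanSpace ℝ (Fin n)) :=
  {l | ∀ z, r u + ⟪l, z - u⟫ ≤ r z}

/-- (Proposition 1 in the paper.) Under the surrogate assumption,
a uniform Slater condition for the subproblem `(P_x)` yields the multiplier bound
`Σᵢ λᵢ ≤ (U − F*)/τ`, and in particular `‖λ‖_∞ ≤ (U − F*)/τ`. -/
theorem uniform_slater_dual_bound {n m : ℕ}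
    (X : Set (EuclideanSpace ℝ (Fin n))) (hXconv : Convex ℝ X) (hXclosed : IsClosed X)
    (f r : EuclideanSpace ℝ (Fin n) → ℝ)
    (c : Fin m → EuclideanSpace ℝ (Fin n) → ℝ)
    (f' : EuclideanSpace ℝ (Fin n) → EuclideanSpace ℝ (Fin n))
    (c' : Fin m → EuclideanSpace ℝ (Fin n) → EuclideanSpace ℝ (Fin n))
    (hf : ∀ x, HasGradientAt f (f' x) x) (hf'cont : Continuous f')
    (hc : ∀ i x, HasGradientAt (c i) (c' i x) x) (hc'cont : ∀ i, Continuous (c' i))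
    (hrconv : ConvexOn ℝ univ r)
    (κ : ℝ) (κi : Fin m → ℝ) (L : ℝ) (Li Ni : Fin m → ℝ)
    (hκ0 : 0 < κ) (hκ1 : κ ≤ 1) (hκi0 : ∀ i, 0 < κi i) (hκi1 : ∀ i, κi i ≤ 1)
    (hL : 0 < L) (hLi : ∀ i, 0 < Li i) (hNi : ∀ i, 0 < Ni i)
    (ft : EuclideanSpace ℝ (Fin n) → EuclideanSpace ℝ (Fin n) → ℝ)
    (ct : Fin m → EuclideanSpace ℝ (Fin n) → EuclideanSpace ℝ (Fin n) → ℝ)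
    (ft' : EuclideanSpace ℝ (Fin n) → EuclideanSpace ℝ (Fin n) → EuclideanSpace ℝ (Fin n))
    (ct' : Fin m → EuclideanSpace ℝ (Fin n) → EuclideanSpace ℝ (Fin n) →
      EuclideanSpace ℝ (Fin n))
    (hftconv : ∀ y, y ∈ X → (∀ i, c i y ≤ 0) → ConvexOn ℝ univ (ft y))
    (hftgrad : ∀ y, y ∈ X → (∀ i, c i y ≤ 0) → ∀ x, HasGradientAt (ft y) (ft' y x) x)
    (hftmaj : ∀ y, y ∈ X → (∀ i, c i y ≤ 0) → ∀ x, f x ≤ ft y x)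
    (hfteq : ∀ y, y ∈ X → (∀ i, c i y ≤ 0) → ft y y = f y)
    (hftholder : ∀ y, y ∈ X → (∀ i, c i y ≤ 0) →
      ∀ x, ‖ft' y x - f' x‖ ≤ 2 * L * ‖x - y‖ ^ κ)
    (hctconv : ∀ i y, y ∈ X → (∀ j, c j y ≤ 0) → ConvexOn ℝ univ (ct i y))
    (hctgrad : ∀ i y, y ∈ X → (∀ j, c j y ≤ 0) → ∀ x, HasGradientAt (ct i y) (ct' i y x) x)
    (hctmaj : ∀ i y, y ∈ X → (∀ j, c j y ≤ 0) → ∀ x, c i x ≤ ct i y x)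
    (hcteq : ∀ i y, y ∈ X → (∀ j, c j y ≤ 0) → ct i y y = c i y)
    (hctholder : ∀ i y, y ∈ X → (∀ j, c j y ≤ 0) →
      ∀ x, ‖ct' i y x - c' i x‖ ≤ 2 * Li i * ‖x - y‖ ^ (κi i))
    (hctbnd : ∀ i x y, x ∈ X → (∀ j, c j x ≤ 0) → y ∈ X → (∀ j, c j y ≤ 0) →
      ‖ct' i y x‖ ≤ Ni i)
    -- `F*` is the optimal value of (P)
    (Fstar : ℝ)
    (hFlb : ∀ z ∈ X, (∀ i, c i z ≤ 0) → Fstar ≤ f z + r z)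
    (hFatt : ∃ z ∈ X, (∀ i, c i z ≤ 0) ∧ f z + r z = Fstar)
    -- a feasible base point `x`
    (x : EuclideanSpace ℝ (Fin n)) (hxX : x ∈ X) (hxfeas : ∀ i, c i x ≤ 0)
    -- the uniform Slater point `x̂` for the subproblem (P_x)
    (U τ : ℝ) (hU : 0 < U) (hτ : 0 < τ)
    (xhat : EuclideanSpace ℝ (Fin n)) (hxhatX : xhat ∈ X)
    (hxhatSlater : ∀ i, ct i x xhat ≤ -τ)
    (hxhatU : ft x xhat + r xhat + (L / (1 + κ)) * ‖xhat - x‖ ^ (1 + κ) ≤ U)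
    -- the first-order (KKT) conditions of the subproblem (P_x)
    (zstar : EuclideanSpace ℝ (Fin n)) (hzX : zstar ∈ X)
    (lam : Fin m → ℝ) (hlam : ∀ i, 0 ≤ lam i)
    (l : EuclideanSpace ℝ (Fin n)) (hl : l ∈ subgrad r zstar)
    (hstat : ∀ z ∈ X, 0 ≤
      ⟪ft' x zstar + l + (L * ‖zstar - x‖ ^ (κ - 1)) • (zstar - x) +
        ∑ i, lam i • ct' i x zstar, z - zstar⟫)
    (hconstr : ∀ i, ct i x zstar ≤ 0)
    (hcomp : ∀ i, lam i * ct i x zstar = 0) :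
    (∑ i, lam i ≤ (U - Fstar) / τ) ∧ ∀ i, lam i ≤ (U - Fstar) / τ := by

  -- abbreviations
  set d := zstar - x with hd
  set v := xhat - zstar with hv
  set a := ‖zstar - x‖ with hA
  set b := ‖xhat - x‖ with hB
  have ha0 : 0 ≤ a := norm_nonneg _
  have hb0 : 0 ≤ b := norm_nonneg _
  have hp0 : (0:ℝ) < 1 + κ := by linarith
  -- feasibility of zstar for (P)
  have hzfeas : ∀ i, c i zstar ≤ 0 := fun i =>
    (hctmaj i x hxX hxfeas zstar).trans (hconstr i)
  have hFz : Fstar ≤ f zstar + r zstar := hFlb zstar hzX hzfeas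
  have hfz : f zstar ≤ ft x zstar := hftmaj x hxX hxfeas zstar
  -- gradient inequality for ft
  have hft : ft x zstar + ⟪ft' x zstar, v⟫ ≤ ft x xhat :=
    convex_grad_ineq (hftconv x hxX hxfeas) (hftgrad x hxX hxfeas zstar) xhat
  -- subgradient inequality for r
  have hr : r zstar + ⟪l, v⟫ ≤ r xhat := hl xhat
  -- constraint gradient inequalities
  have hct : ∀ i, lam i * ⟪ct' i x zstar, v⟫ ≤ -(τ * lam i) := by
    intro i
    have h1 : ct i x zstar + ⟪ct' i x zstar, v⟫ ≤ ct i x xhat :=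
      convex_grad_ineq (hctconv i x hxX hxfeas) (hctgrad i x hxX hxfeas zstar) xhat
    have h2 : ⟪ct' i x zstar, v⟫ ≤ ct i x xhat - ct i x zstar := by linarith
    have h3 := mul_le_mul_of_nonneg_left h2 (hlam i)
    have h4 : lam i * (ct i x xhat - ct i x zstar)
        = lam i * ct i x xhat - lam i * ct i x zstar := by ring
    have h5 := hcomp i
    have h6 : lam i * ct i x xhat ≤ lam i * (-τ) :=
      mul_le_mul_of_nonneg_left (hxhatSlater i) (hlam i)
    nlinarith
  have hctsum : ∑ i, lam i * ⟪ct' i x zstar, v⟫ ≤ -(τ * ∑ i, lam i) := by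
    calc ∑ i, lam i * ⟪ct' i x zstar, v⟫ ≤ ∑ i, -(τ * lam i) :=
          Finset.sum_le_sum (fun i _ => hct i)
      _ = -(τ * ∑ i, lam i) := by rw [Finset.mul_sum, ← Finset.sum_neg_distrib]
  -- norm-power subgradient inequality
  have hnorm : (L * a ^ (κ - 1)) * ⟪d, v⟫
      ≤ (L / (1 + κ)) * b ^ (1 + κ) - (L / (1 + κ)) * a ^ (1 + κ) := by
    rcases eq_or_lt_of_le ha0 with h | h
    · have hd0 : d = 0 := by
        rw [hd]; rw [hA] at h
        exact norm_eq_zero.mp h.symm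
      rw [hd0]
      simp only [inner_zero_left, mul_zero]
      have : a ^ (1 + κ) = 0 := by
        rw [← h, Real.zero_rpow hp0.ne']
      rw [this, mul_zero, sub_zero]
      positivity
    · have hinner : ⟪d, v⟫ ≤ a * (b - a) := by
        have hsplit : ⟪d, v⟫ = ⟪d, xhat - x⟫ - ⟪d, d⟫ := by
          rw [← inner_sub_right]
          congr 1
          rw [hv, hd]; abel
        have hcs : ⟪d, xhat - x⟫ ≤ a * b :=
          (real_inner_le_norm d (xhat - x)).trans (by rw [hA, hB, hd])
        have hdd : ⟪d, d⟫ = a * a := by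
          rw [real_inner_self_eq_norm_mul_norm, hA, hd]
        rw [hsplit, hdd]; nlinarith
      have hs0 : 0 ≤ L * a ^ (κ - 1) := by positivity
      have h1 : (L * a ^ (κ - 1)) * ⟪d, v⟫ ≤ (L * a ^ (κ - 1)) * (a * (b - a)) :=
        mul_le_mul_of_nonneg_left hinner hs0
      have h2 : a ^ (κ - 1) * a = a ^ κ := by
        rw [Real.rpow_sub h, Real.rpow_one, div_mul_cancel₀ _ h.ne']
      have h3 : (L * a ^ (κ - 1)) * (a * (b - a)) = L * (a ^ κ * (b - a)) := by
        rw [← h2]; ring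
      have h4 : a ^ κ * (b - a) ≤ (b ^ (1 + κ) - a ^ (1 + κ)) / (1 + κ) :=
        rpow_grad_ineq ha0 hb0 hκ0 hκ1
      have h5 : L * (a ^ κ * (b - a)) ≤ L * ((b ^ (1 + κ) - a ^ (1 + κ)) / (1 + κ)) :=
        mul_le_mul_of_nonneg_left h4 hL.le
      have h6 : L * ((b ^ (1 + κ) - a ^ (1 + κ)) / (1 + κ))
          = (L / (1 + κ)) * b ^ (1 + κ) - (L / (1 + κ)) * a ^ (1 + κ) := by
        field_simp
      linarith
  -- expand stationarity at xhat
  have hstat' := hstat xhat hxhatX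
  rw [inner_add_left, inner_add_left, inner_add_left, sum_inner,
    real_inner_smul_left] at hstat'
  simp only [real_inner_smul_left] at hstat'
  -- combine
  have hnn : (0:ℝ) ≤ (L / (1 + κ)) * a ^ (1 + κ) := by positivity
  have hmain : τ * ∑ i, lam i ≤ U - Fstar := by
    have hU' : ft x xhat + r xhat + (L / (1 + κ)) * b ^ (1 + κ) ≤ U := by
      rw [hB]; exact hxhatU
    linarith [hstat', hft, hr, hnorm, hctsum, hFz, hfz, hnn, hU']
  have hsum : ∑ i, lam i ≤ (U - Fstar) / τ := by
    rw [le_div_iff₀ hτ]; linarith [hmain]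
  refine ⟨hsum, fun i => le_trans ?_ hsum⟩
  exact Finset.single_le_sum (fun j _ => hlam j) (Finset.mem_univ i)
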